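/- Let F ∈ 𝓕 with ln(1+x) ≲ F(x) for all x ≥ 1. Then L^∞(ℝ²) is strictly contained in BMO_F(ℝ²): every bounded function lies in BMO_F, and there exists an unbounded function in BMO_F, namely x ↦ ln(1 − ln|x|)·1_{|x|≤1}. -/

import Mathlib

open MeasureTheory Metric Real Filter

noncomputable section

/-- The plane `ℝ²`. -/
abbrev Plane := EuclideanSpace ℝ (Fin 2)

/-- Average of `f` over the ball `B(c,r)` (with respect to Lebesgue measure). -/
def ballAvg (f : Plane → ℝ) (c : Plane) (r : ℝ) : ℝ := ⨍ y in ball c r, f y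

/-- `K` is a bound for all mean oscillations of `f` (i.e. `‖f‖_BMO ≤ K`). -/
def OscBound (f : Plane → ℝ) (K : ℝ) : Prop :=
  ∀ c r, 0 < r → (⨍ y in ball c r, |f y - ballAvg f c r|) ≤ K

/-- The `BMO` seminorm of `f`, as a supremum of mean oscillations. -/
def bmoNorm (f : Plane → ℝ) : ℝ :=
  sSup {m | ∃ c r, 0 < r ∧ m = ⨍ y in ball c r, |f y - ballAvg f c r|}

/-- `K` bounds the second (weighted pair of balls) part of the `BMO_F` norm of `f`. -/
def PairBoundF (F : ℝ → ℝ) (f : Plane → ℝ) (K : ℝ) : Prop :=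
  ∀ c₁ r₁ c₂ r₂, 0 < r₂ → 0 < r₁ → r₁ ≤ 1 → ball c₂ (2 * r₂) ⊆ ball c₁ r₁ →
    |ballAvg f c₂ r₂ - ballAvg f c₁ r₁| ≤ K * F ((1 - Real.log r₂) / (1 - Real.log r₁))

/-- The `BMO_F` norm of `f`. -/
def bmoFNorm (F : ℝ → ℝ) (f : Plane → ℝ) : ℝ :=
  bmoNorm f +
    sSup {m | ∃ c₁ r₁ c₂ r₂, 0 < r₂ ∧ 0 < r₁ ∧ r₁ ≤ 1 ∧ ball c₂ (2 * r₂) ⊆ ball c₁ r₁ ∧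
      m = |ballAvg f c₂ r₂ - ballAvg f c₁ r₁| / F ((1 - Real.log r₂) / (1 - Real.log r₁))}

/-- Membership in the space `BMO_F`. -/
def MemBMOF (F : ℝ → ℝ) (f : Plane → ℝ) : Prop :=
  LocallyIntegrable f volume ∧ ∃ K, OscBound f K ∧ PairBoundF F f K

/-- The `LMO_F` norm of `f`. -/
def lmoFNorm (F : ℝ → ℝ) (f : Plane → ℝ) : ℝ :=
  sSup {m | ∃ c r, 0 < r ∧ r ≤ 1 ∧
      m = F (1 - Real.log r) * ⨍ y in ball c r, |f y - ballAvg f c r|} +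
  sSup {m | ∃ c₁ r₁ c₂ r₂, 0 < r₂ ∧ 0 < r₁ ∧ r₁ ≤ 1 ∧ ball c₂ (2 * r₂) ⊆ ball c₁ r₁ ∧
      m = F (1 - Real.log r₁) * |ballAvg f c₂ r₂ - ballAvg f c₁ r₁|}

/-- Membership in the space `LMO_F`. -/
def MemLMOF (F : ℝ → ℝ) (f : Plane → ℝ) : Prop :=
  LocallyIntegrable f volume ∧ ∃ K,
    (∀ c r, 0 < r → r ≤ 1 →
      F (1 - Real.log r) * ⨍ y in ball c r, |f y - ballAvg f c r| ≤ K) ∧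
    (∀ c₁ r₁ c₂ r₂, 0 < r₂ → 0 < r₁ → r₁ ≤ 1 → ball c₂ (2 * r₂) ⊆ ball c₁ r₁ →
      F (1 - Real.log r₁) * |ballAvg f c₂ r₂ - ballAvg f c₁ r₁| ≤ K)

/-- The `L^∞` norm. -/
def supNorm (f : Plane → ℝ) : ℝ := (eLpNorm f ⊤ volume).toReal

/-- The `L^p` norm for a real exponent `p`. -/
def lpNorm (p : ℝ) (f : Plane → ℝ) : ℝ := (eLpNorm f (ENNReal.ofReal p) volume).toReal

/-- The class `𝓕` of admissible weight functions: nondecreasing on `[1,∞)`, `≥ 1` there,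
blowing up at infinity, with the exponential-integral decay condition and submultiplicativity. -/
def ClassF (F : ℝ → ℝ) : Prop :=
  (∀ x, 1 ≤ x → 1 ≤ F x) ∧ (∀ x y, 1 ≤ x → x ≤ y → F x ≤ F y) ∧
  Tendsto F atTop atTop ∧
  ∃ C, 0 < C ∧
    (∀ l x, 1 ≤ l → l ≤ x →
      (∫ y in Set.Ici x, Real.exp (-y / l) * F y) ≤ C * l * Real.exp (-x / l) * F x) ∧
    (∀ x y, 1 ≤ x → 1 ≤ y → F (x * y) ≤ C * F x * F y)

end

/-- The unbounded model function `x ↦ ln(1 − ln|x|)·1_{|x|≤1}`. -/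
noncomputable def logLogFun : Plane → ℝ :=
  fun x => if ‖x‖ ≤ 1 then Real.log (1 - Real.log ‖x‖) else 0

section Helpers
open MeasureTheory Metric Real Filter Set
open scoped ENNReal

namespace BMOAux


noncomputable def g (t : ℝ) : ℝ := if t ≤ 1 then Real.log (1 - Real.log t) else 0

lemma g_of_le {t : ℝ} (h : t ≤ 1) : g t = Real.log (1 - Real.log t) := if_pos h
lemma g_of_gt {t : ℝ} (h : 1 < t) : g t = 0 := if_neg (not_le.2 h)

lemma one_le_sub_log {t : ℝ} (h0 : 0 ≤ t) (h1 : t ≤ 1) : 1 ≤ 1 - Real.log t := by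
  nlinarith [Real.log_nonpos h0 h1]

lemma g_nonneg {t : ℝ} (h0 : 0 ≤ t) : 0 ≤ g t := by
  by_cases h : t ≤ 1
  · rw [g_of_le h]; exact Real.log_nonneg (one_le_sub_log h0 h)
  · rw [g_of_gt (not_le.1 h)]

lemma g_anti {s t : ℝ} (hs : 0 < s) (hst : s ≤ t) : g t ≤ g s := by
  by_cases ht : t ≤ 1
  · rw [g_of_le ht, g_of_le (hst.trans ht)]
    have h1 : 0 < 1 - Real.log t := lt_of_lt_of_le one_pos (one_le_sub_log (hs.trans_le hst).le ht)
    have h2 : Real.log s ≤ Real.log t := Real.log_le_log hs hst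
    exact Real.log_le_log h1 (by linarith)
  · rw [g_of_gt (not_le.1 ht)]; exact g_nonneg hs.le

lemma log_add_le {X L : ℝ} (hX : 1 ≤ X) (hL : 0 ≤ L) : Real.log (X + L) ≤ Real.log X + L := by
  have hX0 : 0 < X := lt_of_lt_of_le one_pos hX
  have h1 : Real.log (X + L) - Real.log X = Real.log ((X + L) / X) :=
    (Real.log_div (by positivity) (ne_of_gt hX0)).symm
  have h2 : Real.log ((X + L) / X) ≤ (X + L) / X - 1 := Real.log_le_sub_one_of_pos (by positivity)
  have h3 : (X + L) / X - 1 = L / X := by field_simp; ring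
  have h4 : L / X ≤ L := div_le_self hL hX
  linarith

lemma log_three_le : Real.log 3 ≤ 2 := by
  nlinarith [Real.log_le_sub_one_of_pos (show (0:ℝ) < 3 by norm_num)]

lemma g_third {s : ℝ} (hs : 0 < s) : g (s / 3) ≤ g s + 2 := by
  have hlog3' : 0 ≤ Real.log 3 := Real.log_nonneg (by norm_num)
  by_cases h1 : s ≤ 1
  · rw [g_of_le h1, g_of_le (by linarith : s / 3 ≤ 1)]
    have hls : Real.log (s / 3) = Real.log s - Real.log 3 := Real.log_div (ne_of_gt hs) (by norm_num)
    have hX : 1 ≤ 1 - Real.log s := one_le_sub_log hs.le h1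
    calc Real.log (1 - Real.log (s / 3)) = Real.log ((1 - Real.log s) + Real.log 3) := by
          rw [hls]; ring_nf
      _ ≤ Real.log (1 - Real.log s) + Real.log 3 := log_add_le hX hlog3'
      _ ≤ _ := by linarith [log_three_le]
  · push_neg at h1
    rw [g_of_gt h1]
    by_cases h2 : s ≤ 3
    · rw [g_of_le (by linarith : s / 3 ≤ 1)]
      have hs3 : 0 < s / 3 := by linarith
      have hX : 1 ≤ 1 - Real.log (s / 3) := one_le_sub_log hs3.le (by linarith)
      have hls : Real.log (s / 3) = Real.log s - Real.log 3 :=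
        Real.log_div (ne_of_gt hs) (by norm_num)
      have hlogs : 0 ≤ Real.log s := Real.log_nonneg h1.le
      have harg : 1 - Real.log (s / 3) ≤ 3 := by rw [hls]; linarith [log_three_le]
      have := Real.log_le_log (lt_of_lt_of_le one_pos hX) harg
      linarith [log_three_le]
    · rw [g_of_gt (by linarith : 1 < s / 3)]; norm_num

lemma g_le_neg_log {t : ℝ} (h0 : 0 < t) (h1 : t ≤ 1) : g t ≤ -Real.log t := by
  rw [g_of_le h1]
  have hp : (0:ℝ) < 1 - Real.log t := lt_of_lt_of_le one_pos (one_le_sub_log h0.le h1)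
  have := Real.log_le_sub_one_of_pos hp
  linarith

lemma neg_log_le {t : ℝ} (h0 : 0 < t) : -Real.log t ≤ 2 * t ^ (-(1/2) : ℝ) := by
  have hu : (0:ℝ) < t ^ (-(1/2) : ℝ) := Real.rpow_pos_of_pos h0 _
  have h1 : Real.log (t ^ (-(1/2) : ℝ)) = -(1/2) * Real.log t := Real.log_rpow h0 _
  have h2 : Real.log (t ^ (-(1/2) : ℝ)) ≤ t ^ (-(1/2) : ℝ) - 1 := Real.log_le_sub_one_of_pos hu
  linarith

lemma g_diff_le_log_div {y s : ℝ} (hy : 0 < y) (hys : y ≤ s) (hs1 : s ≤ 1) :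
    g y - g s ≤ Real.log s - Real.log y := by
  rw [g_of_le (hys.trans hs1), g_of_le hs1]
  have hs0 : 0 < s := hy.trans_le hys
  have hA : 1 ≤ 1 - Real.log s := one_le_sub_log hs0.le hs1
  have hL : 0 ≤ Real.log s - Real.log y := by linarith [Real.log_le_log hy hys]
  have : Real.log (1 - Real.log y) = Real.log ((1 - Real.log s) + (Real.log s - Real.log y)) := by
    ring_nf
  rw [this]
  linarith [log_add_le hA hL]

lemma rpow_half_mul {y : ℝ} (hy : 0 < y) : y * y ^ (-(1/2) : ℝ) = y ^ ((1:ℝ)/2) := by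
  rw [show y * y ^ (-(1/2) : ℝ) = y ^ (1:ℝ) * y ^ (-(1/2):ℝ) by rw [Real.rpow_one],
    ← Real.rpow_add hy]
  norm_num

lemma y_mul_g_le {y : ℝ} (hy : 0 < y) : y * g y ≤ 2 * y ^ ((1:ℝ)/2) := by
  by_cases h1 : y ≤ 1
  · have := (g_le_neg_log hy h1).trans (neg_log_le hy)
    have h2 : y * g y ≤ y * (2 * y ^ (-(1/2) : ℝ)) :=
      mul_le_mul_of_nonneg_left this hy.le
    calc y * g y ≤ y * (2 * y ^ (-(1/2) : ℝ)) := h2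
      _ = 2 * (y * y ^ (-(1/2) : ℝ)) := by ring
      _ = 2 * y ^ ((1:ℝ)/2) := by rw [rpow_half_mul hy]
  · rw [g_of_gt (not_le.1 h1)]
    have : (0:ℝ) ≤ y ^ ((1:ℝ)/2) := Real.rpow_nonneg hy.le _
    nlinarith

lemma y_mul_g_diff_le {y s : ℝ} (hy : 0 < y) (hys : y ≤ s) (hs1 : s ≤ 1) :
    y * (g y - g s) ≤ 2 * s ^ ((1:ℝ)/2) * y ^ ((1:ℝ)/2) := by
  have hs0 : 0 < s := hy.trans_le hys
  have h1 : g y - g s ≤ Real.log s - Real.log y := g_diff_le_log_div hy hys hs1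
  have h2 : Real.log s - Real.log y = -Real.log (y / s) := by
    rw [Real.log_div hy.ne' hs0.ne']; ring
  have h3 : -Real.log (y / s) ≤ 2 * (y / s) ^ (-(1/2) : ℝ) := neg_log_le (by positivity)
  have h4 : (y / s) ^ (-(1/2) : ℝ) = y ^ (-(1/2) : ℝ) * s ^ ((1:ℝ)/2) := by
    rw [Real.div_rpow hy.le hs0.le, Real.rpow_neg hs0.le, div_eq_mul_inv, inv_inv]
  have h6 : g y - g s ≤ 2 * (y ^ (-(1/2) : ℝ) * s ^ ((1:ℝ)/2)) := by
    calc g y - g s ≤ -Real.log (y / s) := h2 ▸ h1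
      _ ≤ 2 * (y / s) ^ (-(1/2) : ℝ) := h3
      _ = 2 * (y ^ (-(1/2) : ℝ) * s ^ ((1:ℝ)/2)) := by rw [h4]
  have h5 : y * (g y - g s) ≤ y * (2 * (y ^ (-(1/2) : ℝ) * s ^ ((1:ℝ)/2))) :=
    mul_le_mul_of_nonneg_left h6 hy.le
  calc y * (g y - g s) ≤ y * (2 * (y ^ (-(1/2) : ℝ) * s ^ ((1:ℝ)/2))) := h5
    _ = 2 * s ^ ((1:ℝ)/2) * (y * y ^ (-(1/2) : ℝ)) := by ring
    _ = 2 * s ^ ((1:ℝ)/2) * y ^ ((1:ℝ)/2) := by rw [rpow_half_mul hy]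

lemma g_pair {r₁ r₂ ρ₁ ρ₂ : ℝ} (hr₂ : 0 < r₂) (hr₁ : 0 < r₁) (h11 : r₁ ≤ 1)
    (h21 : 2 * r₂ ≤ r₁) (hρ₂ : r₂ ≤ ρ₂) (hρ₁ : r₁ ≤ ρ₁) (hρ : ρ₂ ≤ ρ₁)
    (hgap : ρ₁ ≤ ρ₂ + 2 * r₁) :
    g ρ₂ - g ρ₁ ≤ 4 + Real.log ((1 - Real.log r₂) / (1 - Real.log r₁)) := by
  have hρ₂0 : 0 < ρ₂ := hr₂.trans_le hρ₂
  have hρ₁0 : 0 < ρ₁ := hr₁.trans_le hρ₁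
  have hr21 : r₂ ≤ r₁ := by linarith
  have hr2le1 : r₂ ≤ 1 := by linarith
  have hA₁ : 1 ≤ 1 - Real.log r₁ := one_le_sub_log hr₁.le h11
  have hA₂ : 1 ≤ 1 - Real.log r₂ := one_le_sub_log hr₂.le hr2le1
  have hlog12 : Real.log r₂ ≤ Real.log r₁ := Real.log_le_log hr₂ hr21
  have hLdiv : Real.log ((1 - Real.log r₂) / (1 - Real.log r₁)) =
      Real.log (1 - Real.log r₂) - Real.log (1 - Real.log r₁) :=
    Real.log_div (by linarith) (by linarith)
  have hL0 : 0 ≤ Real.log ((1 - Real.log r₂) / (1 - Real.log r₁)) := by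
    rw [hLdiv]
    linarith [Real.log_le_log (by linarith : (0:ℝ) < 1 - Real.log r₁)
      (by linarith : 1 - Real.log r₁ ≤ 1 - Real.log r₂)]
  by_cases hcase : 3 * r₁ < ρ₁
  · have h13 : ρ₁ / 3 ≤ ρ₂ := by linarith
    have := (g_anti (by linarith : 0 < ρ₁ / 3) h13).trans (g_third hρ₁0)
    linarith
  · push_neg at hcase
    have hkey : Real.log (1 - Real.log r₁) ≤ 2 + g ρ₁ := by
      by_cases hρ1le : ρ₁ ≤ 1
      · rw [g_of_le hρ1le]
        have hXρ : 1 ≤ 1 - Real.log ρ₁ := one_le_sub_log hρ₁0.le hρ1le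
        have hlogmul : Real.log ρ₁ ≤ Real.log 3 + Real.log r₁ := by
          have := Real.log_le_log hρ₁0 hcase
          rw [Real.log_mul (by norm_num) hr₁.ne'] at this
          linarith
        have hm : Real.log (1 - Real.log r₁) ≤
            Real.log ((1 - Real.log ρ₁) + Real.log 3) := by
          apply Real.log_le_log (by linarith)
          linarith
        have := log_add_le hXρ (Real.log_nonneg (by norm_num : (1:ℝ) ≤ 3))
        linarith [log_three_le]
      · push_neg at hρ1le
        rw [g_of_gt hρ1le]
        have hr13 : 1 / 3 < r₁ := by linarith
        have : Real.log (1/3) < Real.log r₁ := Real.log_lt_log (by norm_num) hr13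
        have hlog13 : Real.log (1/3 : ℝ) = -Real.log 3 := by
          rw [show (1/3 : ℝ) = 3⁻¹ by norm_num, Real.log_inv]
        have harg : 1 - Real.log r₁ ≤ 3 := by
          rw [hlog13] at this; linarith [log_three_le]
        have := Real.log_le_log (by linarith : (0:ℝ) < 1 - Real.log r₁) harg
        linarith [log_three_le]
    have hgρ₂ : g ρ₂ ≤ Real.log (1 - Real.log r₂) := by
      have := g_anti hr₂ hρ₂
      rwa [g_of_le hr2le1] at this
    rw [hLdiv] at *
    linarith

lemma g_one_zero {t : ℝ} (h : 1 ≤ t) : g t = 0 := by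
  rcases eq_or_lt_of_le h with h' | h'
  · rw [← h', g_of_le le_rfl]; simp
  · exact g_of_gt h'

lemma finrank_plane : Module.finrank ℝ Plane = 2 := by
  simp [finrank_euclideanSpace_fin]

/-- Polar-coordinate formula for the Lebesgue lower integral on the plane. -/
lemma lintegral_polar (G : ℝ → ℝ≥0∞) (hG : Measurable G) :
    ∫⁻ x : Plane, G ‖x‖ =
      2 * (volume (ball (0:Plane) 1)) * ∫⁻ y in Ioi (0:ℝ), ENNReal.ofReal y * G y := by
  have h1 : ∫⁻ x : Plane, G ‖x‖ =
      ∫⁻ x : ({(0:Plane)}ᶜ : Set Plane), G ‖(x : Plane)‖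
        ∂((volume : Measure Plane).comap Subtype.val) := by
    rw [lintegral_subtype_comap (measurableSet_singleton _).compl (fun x : Plane => G ‖x‖),
      MeasureTheory.restrict_compl_singleton]
  have h2 := (Measure.measurePreserving_homeomorphUnitSphereProd
      (volume : Measure Plane)).lintegral_comp
      (f := fun p : (sphere (0:Plane) 1) × (Ioi (0:ℝ)) => G p.2)
      ((hG.comp measurable_subtype_coe).comp measurable_snd)
  have h2' : ∫⁻ x : ({(0:Plane)}ᶜ : Set Plane), G ‖(x : Plane)‖
      ∂((volume : Measure Plane).comap Subtype.val) =
      ∫⁻ p : (sphere (0:Plane) 1) × (Ioi (0:ℝ)), G p.2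
      ∂(((volume : Measure Plane).toSphere).prod
        (Measure.volumeIoiPow (Module.finrank ℝ Plane - 1))) := by
    simpa only [homeomorphUnitSphereProd_apply_snd_coe] using h2
  rw [h1, h2']
  have h3 : ∫⁻ p : (sphere (0:Plane) 1) × (Ioi (0:ℝ)), G p.2
      ∂(((volume : Measure Plane).toSphere).prod
        (Measure.volumeIoiPow (Module.finrank ℝ Plane - 1))) =
      ((volume : Measure Plane).toSphere univ) *
        ∫⁻ y, G y ∂(Measure.volumeIoiPow (Module.finrank ℝ Plane - 1)) := by
    rw [lintegral_prod _ (show AEMeasurable (fun p : (sphere (0:Plane) 1) × (Ioi (0:ℝ)) =>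
      G p.2) _ from ((hG.comp measurable_subtype_coe).comp measurable_snd).aemeasurable)]
    simp [lintegral_const]
    ring
  rw [h3, Measure.toSphere_apply_univ, finrank_plane]
  have h4 : ∫⁻ y, G y ∂(Measure.volumeIoiPow (2 - 1)) =
      ∫⁻ y in Ioi (0:ℝ), ENNReal.ofReal y * G y := by
    rw [Measure.volumeIoiPow,
      lintegral_withDensity_eq_lintegral_mul _ (by fun_prop)
        (show Measurable (fun y : Ioi (0:ℝ) => G ↑y) from hG.comp measurable_subtype_coe)]
    simp only [show (2 - 1 : ℕ) = 1 from rfl, pow_one, Pi.mul_apply]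
    exact lintegral_subtype_comap measurableSet_Ioi (fun y => ENNReal.ofReal y * G y)
  rw [h4]
  push_cast
  ring

lemma lintegral_Ioi_le {φ : ℝ → ℝ≥0∞} {s C : ℝ} (hs : 0 < s) (hC : 0 ≤ C)
    (h1 : ∀ y, 0 < y → y < s → φ y ≤ ENNReal.ofReal (C * y ^ ((1:ℝ)/2)))
    (h2 : ∀ y, s ≤ y → φ y = 0) :
    ∫⁻ y in Ioi (0:ℝ), φ y ≤ ENNReal.ofReal (C * (2/3) * s ^ ((3:ℝ)/2)) := by
  have hsplit : Ioi (0:ℝ) = Ioo 0 s ∪ Ici s := by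
    ext y; simp only [mem_Ioi, mem_union, mem_Ioo, mem_Ici]
    constructor
    · intro hy; rcases lt_or_ge y s with h | h
      · exact Or.inl ⟨hy, h⟩
      · exact Or.inr h
    · rintro (⟨h, _⟩ | h); exacts [h, hs.trans_le h]
  have hdisj : Disjoint (Ioo (0:ℝ) s) (Ici s) :=
    Set.disjoint_left.mpr (fun y hy hy' => absurd hy.2 (not_lt.2 hy'))
  rw [hsplit, lintegral_union measurableSet_Ici hdisj]
  have hz : ∫⁻ y in Ici s, φ y = 0 := by
    rw [setLIntegral_congr_fun measurableSet_Ici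
      (fun y hy => h2 y hy)]
    simp
  rw [hz, add_zero]
  have hmono : ∫⁻ y in Ioo (0:ℝ) s, φ y ≤
      ∫⁻ y in Ioo (0:ℝ) s, ENNReal.ofReal (C * y ^ ((1:ℝ)/2)) := by
    apply setLIntegral_mono (by fun_prop)
    exact fun y hy => h1 y hy.1 hy.2
  have hInt : IntegrableOn (fun y : ℝ => C * y ^ ((1:ℝ)/2)) (Ioo (0:ℝ) s) := by
    apply Integrable.const_mul
    exact ((intervalIntegral.intervalIntegrable_rpow' (by norm_num)).1).mono_set
      Ioo_subset_Ioc_self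
  have hae : 0 ≤ᵐ[volume.restrict (Ioo (0:ℝ) s)] fun y : ℝ => C * y ^ ((1:ℝ)/2) := by
    rw [EventuallyLE, ae_restrict_iff' measurableSet_Ioo]
    exact Filter.Eventually.of_forall
      (fun y hy => mul_nonneg hC (Real.rpow_nonneg hy.1.le _))
  have heq : ∫⁻ y in Ioo (0:ℝ) s, ENNReal.ofReal (C * y ^ ((1:ℝ)/2)) =
      ENNReal.ofReal (∫ y in Ioo (0:ℝ) s, C * y ^ ((1:ℝ)/2)) :=
    (ofReal_integral_eq_lintegral_ofReal hInt hae).symm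
  have hval : ∫ y in Ioo (0:ℝ) s, C * y ^ ((1:ℝ)/2) = C * (2/3) * s ^ ((3:ℝ)/2) := by
    rw [← integral_Ioc_eq_integral_Ioo, ← intervalIntegral.integral_of_le hs.le,
      intervalIntegral.integral_const_mul, integral_rpow (Or.inl (by norm_num))]
    rw [Real.zero_rpow (by norm_num)]
    norm_num
    ring_nf
  calc ∫⁻ y in Ioo (0:ℝ) s, φ y ≤ _ := hmono
    _ = ENNReal.ofReal (C * (2/3) * s ^ ((3:ℝ)/2)) := by rw [heq, hval]

lemma g_meas : Measurable g := by
  unfold g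
  exact Measurable.ite (measurableSet_le measurable_id measurable_const)
    (Real.measurable_log.comp (measurable_const.sub Real.measurable_log)) measurable_const

/-- The indicator comparison profile. -/
noncomputable def Gs (s y : ℝ) : ℝ≥0∞ := if y < s then ENNReal.ofReal (g y - g s) else 0

lemma Gs_meas (s : ℝ) : Measurable (Gs s) := by
  unfold Gs
  exact Measurable.ite (measurableSet_lt measurable_id measurable_const)
    (ENNReal.measurable_ofReal.comp ((g_meas.sub measurable_const))) measurable_const

lemma keyA {s : ℝ} (hs : 0 < s) (hs1 : s ≤ 1) :
    ∫⁻ x : Plane, Gs s ‖x‖ ≤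
      2 * volume (ball (0:Plane) 1) * ENNReal.ofReal ((4/3) * s ^ 2) := by
  rw [lintegral_polar _ (Gs_meas s)]
  have hb : ∫⁻ y in Ioi (0:ℝ), ENNReal.ofReal y * Gs s y ≤
      ENNReal.ofReal ((2 * s ^ ((1:ℝ)/2)) * (2/3) * s ^ ((3:ℝ)/2)) := by
    apply lintegral_Ioi_le hs (by positivity)
    · intro y hy hys
      rw [Gs, if_pos hys, ← ENNReal.ofReal_mul hy.le]
      apply ENNReal.ofReal_le_ofReal
      calc y * (g y - g s) ≤ 2 * s ^ ((1:ℝ)/2) * y ^ ((1:ℝ)/2) :=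
            y_mul_g_diff_le hy hys.le hs1
        _ = 2 * s ^ ((1:ℝ)/2) * y ^ ((1:ℝ)/2) := rfl
    · intro y hys
      rw [Gs, if_neg (not_lt.2 hys), mul_zero]
  have heq : (2 * s ^ ((1:ℝ)/2)) * (2/3) * s ^ ((3:ℝ)/2) = (4/3) * s ^ 2 := by
    have : s ^ ((1:ℝ)/2) * s ^ ((3:ℝ)/2) = s ^ 2 := by
      rw [← Real.rpow_add hs, ← Real.rpow_natCast s 2]
      norm_num
    nlinarith [this]
  rw [heq] at hb
  exact mul_le_mul_right hb _

lemma keyB {s : ℝ} (hs1 : 1 < s) :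
    ∫⁻ x : Plane, Gs s ‖x‖ ≤
      2 * volume (ball (0:Plane) 1) * ENNReal.ofReal (4/3) := by
  rw [lintegral_polar _ (Gs_meas s)]
  have hb : ∫⁻ y in Ioi (0:ℝ), ENNReal.ofReal y * Gs s y ≤
      ENNReal.ofReal ((2:ℝ) * (2/3) * (1:ℝ) ^ ((3:ℝ)/2)) := by
    apply lintegral_Ioi_le one_pos (by norm_num)
    · intro y hy hy1
      rw [Gs, if_pos (hy1.trans hs1), ← ENNReal.ofReal_mul hy.le]
      apply ENNReal.ofReal_le_ofReal
      have h1 : y * (g y - g s) ≤ y * g y := by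
        have := g_nonneg (show (0:ℝ) ≤ s by linarith)
        nlinarith
      exact h1.trans (y_mul_g_le hy)
    · intro y hy1
      rw [Gs]
      by_cases h : y < s
      · rw [if_pos h]
        have : g y - g s ≤ 0 := by
          rw [g_one_zero hy1]
          simp [g_nonneg (show (0:ℝ) ≤ s by linarith)]
        simp [ENNReal.ofReal_eq_zero.2 this, mul_zero]
      · rw [if_neg h, mul_zero]
  have heq : (2:ℝ) * (2/3) * (1:ℝ) ^ ((3:ℝ)/2) = 4/3 := by
    rw [Real.one_rpow]; norm_num
  rw [heq] at hb
  exact mul_le_mul_right hb _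

lemma keyC : ∫⁻ x : Plane, ENNReal.ofReal (g ‖x‖) ≤
    2 * volume (ball (0:Plane) 1) * ENNReal.ofReal (4/3) := by
  rw [lintegral_polar (fun y => ENNReal.ofReal (g y)) (ENNReal.measurable_ofReal.comp g_meas)]
  have hb : ∫⁻ y in Ioi (0:ℝ), ENNReal.ofReal y * ENNReal.ofReal (g y) ≤
      ENNReal.ofReal ((2:ℝ) * (2/3) * (1:ℝ) ^ ((3:ℝ)/2)) := by
    apply lintegral_Ioi_le one_pos (by norm_num)
    · intro y hy _
      rw [← ENNReal.ofReal_mul hy.le]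
      exact ENNReal.ofReal_le_ofReal (y_mul_g_le hy)
    · intro y hy1
      rw [g_one_zero hy1]
      simp
  have heq : (2:ℝ) * (2/3) * (1:ℝ) ^ ((3:ℝ)/2) = 4/3 := by
    rw [Real.one_rpow]; norm_num
  rw [heq] at hb
  exact mul_le_mul_right hb _


lemma ball_vol_pos {c : Plane} {r : ℝ} (hr : 0 < r) : 0 < (volume (ball c r)).toReal :=
  ENNReal.toReal_pos (measure_ball_pos volume c hr).ne' measure_ball_lt_top.ne

lemma avg_le_of_ae {f : Plane → ℝ} {c : Plane} {r C : ℝ} (hr : 0 < r)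
    (hf : IntegrableOn f (ball c r) volume)
    (h : ∀ᵐ x ∂(volume.restrict (ball c r)), f x ≤ C) :
    ⨍ x in ball c r, f x ≤ C := by
  rw [setAverage_eq, smul_eq_mul]
  have h1 : ∫ x in ball c r, f x ≤ ∫ x in ball c r, C :=
    integral_mono_ae hf (integrableOn_const measure_ball_lt_top.ne) h
  rw [setIntegral_const, smul_eq_mul] at h1
  have h2 := ball_vol_pos (c := c) hr
  calc (volume (ball c r)).toReal⁻¹ * ∫ x in ball c r, f x ≤
      (volume (ball c r)).toReal⁻¹ * ((volume (ball c r)).toReal * C) := by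
        apply mul_le_mul_of_nonneg_left h1 (by positivity)
    _ = C := by field_simp

lemma le_avg_of_ae {f : Plane → ℝ} {c : Plane} {r C : ℝ} (hr : 0 < r)
    (hf : IntegrableOn f (ball c r) volume)
    (h : ∀ᵐ x ∂(volume.restrict (ball c r)), C ≤ f x) :
    C ≤ ⨍ x in ball c r, f x := by
  rw [setAverage_eq, smul_eq_mul]
  have h1 : ∫ x in ball c r, C ≤ ∫ x in ball c r, f x :=
    integral_mono_ae (integrableOn_const measure_ball_lt_top.ne) hf h
  rw [setIntegral_const, smul_eq_mul] at h1
  have h2 := ball_vol_pos (c := c) hr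
  calc C = (volume (ball c r)).toReal⁻¹ * ((volume (ball c r)).toReal * C) := by field_simp
    _ ≤ (volume (ball c r)).toReal⁻¹ * ∫ x in ball c r, f x := by
        apply mul_le_mul_of_nonneg_left h1 (by positivity)

lemma avg_sub_const {f : Plane → ℝ} {c : Plane} {r : ℝ} (hr : 0 < r)
    (hf : IntegrableOn f (ball c r) volume) (C : ℝ) :
    ⨍ x in ball c r, (f x - C) = (⨍ x in ball c r, f x) - C := by
  rw [setAverage_eq, setAverage_eq, smul_eq_mul, smul_eq_mul,
    integral_sub hf (integrableOn_const measure_ball_lt_top.ne),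
    setIntegral_const, smul_eq_mul]
  have h2 := ball_vol_pos (c := c) hr
  rw [measureReal_def]
  field_simp

lemma avg_mono_ae {f₁ f₂ : Plane → ℝ} {c : Plane} {r : ℝ} (hr : 0 < r)
    (hf₁ : IntegrableOn f₁ (ball c r) volume) (hf₂ : IntegrableOn f₂ (ball c r) volume)
    (h : ∀ᵐ x ∂(volume.restrict (ball c r)), f₁ x ≤ f₂ x) :
    ⨍ x in ball c r, f₁ x ≤ ⨍ x in ball c r, f₂ x := by
  rw [setAverage_eq, setAverage_eq, smul_eq_mul, smul_eq_mul]
  exact mul_le_mul_of_nonneg_left (integral_mono_ae hf₁ hf₂ h) (by positivity)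

lemma ae_norm_pos : ∀ᵐ x : Plane ∂volume, 0 < ‖x‖ := by
  rw [ae_iff]
  have hsub : {x : Plane | ¬ 0 < ‖x‖} ⊆ {(0 : Plane)} := by
    intro x hx
    simp only [mem_setOf_eq, not_lt] at hx
    simpa [mem_singleton_iff] using norm_le_zero_iff.1 hx
  exact measure_mono_null hsub (measure_singleton 0)


lemma g_norm_integrable : Integrable (fun x : Plane => g ‖x‖) volume := by
  refine ⟨(g_meas.comp measurable_norm).aestronglyMeasurable, ?_⟩
  rw [hasFiniteIntegral_def]
  have heq : ∀ x : Plane, (‖g ‖x‖‖₊ : ℝ≥0∞) = ENNReal.ofReal (g ‖x‖) := fun x =>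
    Real.enorm_eq_ofReal (g_nonneg (norm_nonneg x))
  calc ∫⁻ x : Plane, (‖g ‖x‖‖₊ : ℝ≥0∞) = ∫⁻ x : Plane, ENNReal.ofReal (g ‖x‖) := by
        exact lintegral_congr heq
    _ ≤ 2 * volume (ball (0:Plane) 1) * ENNReal.ofReal (4/3) := keyC
    _ < ⊤ := by
        rw [lt_top_iff_ne_top]
        exact ENNReal.mul_ne_top (ENNReal.mul_ne_top (by simp) measure_ball_lt_top.ne)
          ENNReal.ofReal_ne_top

lemma norm_lt_ball {c x : Plane} {r : ℝ} (hx : x ∈ ball c r) : ‖x‖ < ‖c‖ + r := by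
  have h1 : dist x c < r := mem_ball.1 hx
  rw [dist_eq_norm] at h1
  calc ‖x‖ = ‖(x - c) + c‖ := by rw [sub_add_cancel]
    _ ≤ ‖x - c‖ + ‖c‖ := norm_add_le _ _
    _ < ‖c‖ + r := by linarith

lemma norm_ge_ball {c x : Plane} {r : ℝ} (hx : x ∈ ball c r) : ‖c‖ - r ≤ ‖x‖ := by
  have h1 : dist x c < r := mem_ball.1 hx
  rw [dist_eq_norm] at h1
  have h2 : ‖c‖ ≤ ‖x‖ + ‖x - c‖ := by
    calc ‖c‖ = ‖x - (x - c)‖ := by rw [sub_sub_cancel]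
      _ ≤ ‖x‖ + ‖x - c‖ := norm_sub_le _ _
  linarith

lemma g_le_ballAvg {c : Plane} {r : ℝ} (hr : 0 < r) :
    g (‖c‖ + r) ≤ ⨍ x in ball c r, g ‖x‖ := by
  apply le_avg_of_ae hr g_norm_integrable.integrableOn
  filter_upwards [ae_restrict_of_ae ae_norm_pos, ae_restrict_mem measurableSet_ball]
    with x hx hmem
  exact g_anti hx (le_of_lt (norm_lt_ball hmem))

lemma ballAvg_g_le {c : Plane} {r : ℝ} (hr : 0 < r) :
    ⨍ x in ball c r, g ‖x‖ ≤ g (‖c‖ + r) + 24 := by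
  have hρ0 : 0 < ‖c‖ + r := add_pos_of_nonneg_of_pos (norm_nonneg c) hr
  by_cases hcase : 2 * r ≤ ‖c‖
  · have hpt : ∀ᵐ x ∂(volume.restrict (ball c r)), g ‖x‖ ≤ g (‖c‖ + r) + 2 := by
      filter_upwards [ae_restrict_mem measurableSet_ball] with x hx
      have h2 : ‖c‖ - r ≤ ‖x‖ := norm_ge_ball hx
      have h1 : (‖c‖ + r) / 3 ≤ ‖x‖ := by linarith
      have := g_anti (show 0 < (‖c‖ + r)/3 by linarith) h1
      linarith [g_third hρ0]
    have := avg_le_of_ae hr g_norm_integrable.integrableOn hpt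
    linarith [g_third hρ0]
  · push_neg at hcase
    set ρ := ‖c‖ + r with hρdef
    set s := 3 * r with hs
    have hρs : ρ < s := by rw [hρdef, hs]; linarith
    have hs0 : 0 < s := by rw [hs]; linarith
    have haeg : ∀ᵐ x ∂(volume.restrict (ball c r)), 0 ≤ g ‖x‖ - g ρ := by
      filter_upwards [ae_restrict_of_ae ae_norm_pos, ae_restrict_mem measurableSet_ball]
        with x hx hmem
      have := g_anti hx (le_of_lt (norm_lt_ball hmem))
      linarith
    have hint : IntegrableOn (fun x : Plane => g ‖x‖ - g ρ) (ball c r) volume :=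
      g_norm_integrable.integrableOn.sub (integrableOn_const measure_ball_lt_top.ne)
    have heq1 : ∫ x in ball c r, (g ‖x‖ - g ρ) =
        (∫⁻ x in ball c r, ENNReal.ofReal (g ‖x‖ - g ρ)).toReal :=
      integral_eq_lintegral_of_nonneg_ae haeg hint.aestronglyMeasurable
    have hle1 : ∫⁻ x in ball c r, ENNReal.ofReal (g ‖x‖ - g ρ) ≤ ∫⁻ x : Plane, Gs s ‖x‖ := by
      calc ∫⁻ x in ball c r, ENNReal.ofReal (g ‖x‖ - g ρ)
          ≤ ∫⁻ x in ball c r, Gs s ‖x‖ := by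
            apply setLIntegral_mono ((Gs_meas s).comp measurable_norm)
            intro x hx
            have hxs : ‖x‖ < s := by
              have := norm_lt_ball hx
              rw [hs]; rw [hρdef] at *; linarith
            have hGs : (Gs s ∘ Norm.norm) x = ENNReal.ofReal (g ‖x‖ - g s) := if_pos hxs
            rw [hGs]
            apply ENNReal.ofReal_le_ofReal
            have : g s ≤ g ρ := g_anti hρ0 hρs.le
            linarith
        _ ≤ _ := setLIntegral_le_lintegral _ _
    set VT := (volume (ball (0:Plane) 1)).toReal with hVT
    have hVT0 : 0 < VT := ball_vol_pos one_pos
    have hVof : (volume (ball (0:Plane) 1)) = ENNReal.ofReal VT :=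
      (ENNReal.ofReal_toReal measure_ball_lt_top.ne).symm
    have hvolB : (volume (ball c r)).toReal = r^2 * VT := by
      rw [Measure.addHaar_ball volume c hr.le, finrank_plane, ENNReal.toReal_mul,
        ENNReal.toReal_ofReal (by positivity), hVT]
    have hbound : (∫⁻ x : Plane, Gs s ‖x‖) ≤ ENNReal.ofReal (24 * (r^2 * VT)) := by
      by_cases hs1 : s ≤ 1
      · refine le_trans (keyA hs0 hs1) ?_
        rw [hVof, show (2:ℝ≥0∞) = ENNReal.ofReal 2 by simp,
          ← ENNReal.ofReal_mul (by norm_num), ← ENNReal.ofReal_mul (by positivity)]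
        apply ENNReal.ofReal_le_ofReal
        have hseq : s^2 = 9 * r^2 := by rw [hs]; ring
        rw [hseq]
        nlinarith [hVT0]
      · push_neg at hs1
        refine le_trans (keyB hs1) ?_
        rw [hVof, show (2:ℝ≥0∞) = ENNReal.ofReal 2 by simp,
          ← ENNReal.ofReal_mul (by norm_num), ← ENNReal.ofReal_mul (by positivity)]
        apply ENNReal.ofReal_le_ofReal
        have hr3 : 1/3 < r := by rw [hs] at hs1; linarith
        have hrsq : 1/9 < r^2 := by nlinarith
        nlinarith [mul_lt_mul_of_pos_left hrsq hVT0]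
    have hIle : ∫ x in ball c r, (g ‖x‖ - g ρ) ≤ 24 * (r^2 * VT) := by
      rw [heq1]
      have h1 := ENNReal.toReal_mono ENNReal.ofReal_ne_top (hle1.trans hbound)
      rwa [ENNReal.toReal_ofReal (by positivity)] at h1
    have havg : ⨍ x in ball c r, (g ‖x‖ - g ρ) ≤ 24 := by
      rw [setAverage_eq, smul_eq_mul, measureReal_def, hvolB]
      calc (r^2 * VT)⁻¹ * ∫ x in ball c r, (g ‖x‖ - g ρ)
          ≤ (r^2 * VT)⁻¹ * (24 * (r^2 * VT)) := by
            apply mul_le_mul_of_nonneg_left hIle (by positivity)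
        _ = 24 := by field_simp
    have hsub := avg_sub_const (c := c) (r := r) hr g_norm_integrable.integrableOn (g ρ)
    rw [hsub] at havg
    linarith

lemma ratio_ge_one {r₁ r₂ : ℝ} (hr₂ : 0 < r₂) (h21 : 2 * r₂ ≤ r₁) (h11 : r₁ ≤ 1) :
    1 ≤ (1 - Real.log r₂) / (1 - Real.log r₁) := by
  have hr₁ : 0 < r₁ := by linarith
  have h1 : Real.log r₂ ≤ Real.log r₁ := Real.log_le_log hr₂ (by linarith)
  have h2 : Real.log r₁ ≤ 0 := Real.log_nonpos hr₁.le h11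
  rw [le_div_iff₀ (by linarith)]
  linarith

lemma ball_incl {c₁ c₂ : Plane} {r R : ℝ} (hr : 0 < r) (h : ball c₂ r ⊆ ball c₁ R) :
    dist c₂ c₁ + r ≤ R := by
  classical
  set e : Plane := EuclideanSpace.single (0 : Fin 2) (1:ℝ) with he_def
  have he : ‖e‖ = 1 := by rw [he_def, EuclideanSpace.norm_single]; norm_num
  set u : Plane := if c₂ = c₁ then e else ‖c₂ - c₁‖⁻¹ • (c₂ - c₁) with hu
  have hu1 : ‖u‖ = 1 := by
    by_cases hcc : c₂ = c₁
    · rw [hu, if_pos hcc, he]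
    · have hd : 0 < ‖c₂ - c₁‖ := norm_pos_iff.2 (sub_ne_zero.2 hcc)
      rw [hu, if_neg hcc, norm_smul, norm_inv, norm_norm, inv_mul_cancel₀ hd.ne']
  have hnorm : ∀ t : ℝ, 0 ≤ t → ‖c₂ - c₁ + t • u‖ = dist c₂ c₁ + t := by
    intro t ht
    by_cases hcc : c₂ = c₁
    · rw [hcc, sub_self, zero_add, norm_smul, hu1, mul_one, dist_self, zero_add,
        Real.norm_eq_abs, abs_of_nonneg ht]
    · have hd : 0 < ‖c₂ - c₁‖ := norm_pos_iff.2 (sub_ne_zero.2 hcc)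
      rw [hu, if_neg hcc]
      have hcomb : c₂ - c₁ + t • (‖c₂ - c₁‖⁻¹ • (c₂ - c₁)) =
          (1 + t * ‖c₂ - c₁‖⁻¹) • (c₂ - c₁) := by
        rw [smul_smul, add_smul, one_smul]
      rw [hcomb, norm_smul, Real.norm_eq_abs, abs_of_nonneg (by positivity), dist_eq_norm]
      field_simp
  have key : ∀ ε : ℝ, 0 < ε → ε < r → dist c₂ c₁ + r < R + ε := by
    intro ε hε hεr
    have hz : c₂ + (r - ε) • u ∈ ball c₂ r := by
      rw [mem_ball, dist_eq_norm, add_sub_cancel_left, norm_smul, hu1, mul_one,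
        Real.norm_eq_abs, abs_of_nonneg (by linarith)]
      linarith
    have hz2 := h hz
    rw [mem_ball, dist_eq_norm] at hz2
    have hre : c₂ + (r - ε) • u - c₁ = c₂ - c₁ + (r - ε) • u := by abel
    rw [hre, hnorm (r - ε) (by linarith)] at hz2
    linarith
  by_contra hcon
  push_neg at hcon
  have hd0 : 0 ≤ dist c₂ c₁ := dist_nonneg
  have hε0 : 0 < min (r/2) ((dist c₂ c₁ + r - R)/2) := by
    apply lt_min (by linarith) (by linarith)
  have hεr : min (r/2) ((dist c₂ c₁ + r - R)/2) < r :=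
    lt_of_le_of_lt (min_le_left _ _) (by linarith)
  have hk := key _ hε0 hεr
  have hm := min_le_right (r/2) ((dist c₂ c₁ + r - R)/2)
  linarith

end BMOAux

end Helpers

open BMOAux

/-- If `F ∈ 𝓕` dominates `ln(1+·)`, then `L^∞(ℝ²)` is strictly contained in
`BMO_F(ℝ²)`: every bounded (measurable) function lies in `BMO_F`, and the unbounded function
`x ↦ ln(1 − ln|x|)·1_{|x|≤1}` also lies in `BMO_F`. -/
theorem linfty_strictly_contained_bmoF (F : ℝ → ℝ) (hF : ClassF F)
    (hlog : ∃ c : ℝ, 0 < c ∧ ∀ x, 1 ≤ x → Real.log (1 + x) ≤ c * F x) :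
    (∀ f : Plane → ℝ, Measurable f → (∃ M : ℝ, ∀ x, |f x| ≤ M) → MemBMOF F f) ∧
    MemBMOF F logLogFun ∧ ¬ ∃ M : ℝ, ∀ x, |logLogFun x| ≤ M := by
  obtain ⟨cF, hcF0, hcF⟩ := hlog
  have hF1 : ∀ x, 1 ≤ x → 1 ≤ F x := hF.1
  refine ⟨?_, ?_, ?_⟩
  · -- bounded functions lie in BMO_F
    rintro f hf ⟨M, hM⟩
    have hM0 : 0 ≤ M := le_trans (abs_nonneg _) (hM 0)
    have hfI : ∀ (c : Plane) (r : ℝ), IntegrableOn f (ball c r) volume := by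
      intro c r
      apply Integrable.mono' (g := fun _ => M)
        (integrableOn_const measure_ball_lt_top.ne) hf.aestronglyMeasurable.restrict
      exact Filter.Eventually.of_forall fun y => by simpa [Real.norm_eq_abs] using hM y
    have habs : ∀ (c : Plane) (r : ℝ), 0 < r → |ballAvg f c r| ≤ M := fun c r hr =>
      abs_le.2 ⟨le_avg_of_ae hr (hfI c r) (.of_forall fun y => (abs_le.1 (hM y)).1),
        avg_le_of_ae hr (hfI c r) (.of_forall fun y => (abs_le.1 (hM y)).2)⟩
    refine ⟨fun x => ⟨ball x 1, ball_mem_nhds x one_pos, hfI x 1⟩, 2 * M, ?_, ?_⟩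
    · intro c r hr
      apply avg_le_of_ae hr
        ((hfI c r).sub (integrableOn_const measure_ball_lt_top.ne)).abs
      apply Filter.Eventually.of_forall
      intro y
      have h1 := abs_le.1 (hM y)
      have h2 := abs_le.1 (habs c r hr)
      show |f y - ballAvg f c r| ≤ 2 * M
      rw [abs_le]
      exact ⟨by linarith, by linarith⟩
    · intro c₁ r₁ c₂ r₂ hr₂ hr₁ h11 hsub
      have hdist := ball_incl (by positivity) hsub
      have h21 : 2 * r₂ ≤ r₁ := by linarith [dist_nonneg (x := c₂) (y := c₁)]
      have hratio := ratio_ge_one hr₂ h21 h11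
      have hFr := hF1 _ hratio
      have hA2 := abs_le.1 (habs c₂ r₂ hr₂)
      have hA1 := abs_le.1 (habs c₁ r₁ hr₁)
      calc |ballAvg f c₂ r₂ - ballAvg f c₁ r₁| ≤ 2 * M := by
            rw [abs_le]; exact ⟨by linarith, by linarith⟩
        _ ≤ 2 * M * F ((1 - Real.log r₂) / (1 - Real.log r₁)) :=
            le_mul_of_one_le_right (by linarith) hFr
  · -- logLogFun lies in BMO_F
    refine ⟨?_, 76 + cF, ?_, ?_⟩
    · exact (g_norm_integrable).locallyIntegrable
    · -- oscillation bound
      intro c r hr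
      have h1 : BMOAux.g (‖c‖ + r) ≤ ⨍ x in ball c r, BMOAux.g ‖x‖ := g_le_ballAvg hr
      have h2 : (⨍ x in ball c r, BMOAux.g ‖x‖) ≤ BMOAux.g (‖c‖ + r) + 24 := ballAvg_g_le hr
      have hintg : IntegrableOn (fun x : Plane => BMOAux.g ‖x‖) (ball c r) volume :=
        g_norm_integrable.integrableOn
      have hint1 : IntegrableOn
          (fun y : Plane => |BMOAux.g ‖y‖ - ⨍ x in ball c r, BMOAux.g ‖x‖|) (ball c r) volume :=
        (hintg.sub (integrableOn_const measure_ball_lt_top.ne)).abs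
      have hint2 : IntegrableOn (fun y : Plane =>
          BMOAux.g ‖y‖ - (2 * BMOAux.g (‖c‖ + r) - ⨍ x in ball c r, BMOAux.g ‖x‖))
          (ball c r) volume :=
        hintg.sub (integrableOn_const measure_ball_lt_top.ne)
      have hmono : (⨍ y in ball c r, |BMOAux.g ‖y‖ - ⨍ x in ball c r, BMOAux.g ‖x‖|) ≤
          ⨍ y in ball c r,
            (BMOAux.g ‖y‖ - (2 * BMOAux.g (‖c‖ + r) - ⨍ x in ball c r, BMOAux.g ‖x‖)) := by
        apply avg_mono_ae hr hint1 hint2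
        filter_upwards [ae_restrict_of_ae ae_norm_pos, ae_restrict_mem measurableSet_ball]
          with y hy hmem
        have h3 : BMOAux.g (‖c‖ + r) ≤ BMOAux.g ‖y‖ := g_anti hy (le_of_lt (norm_lt_ball hmem))
        rw [abs_le]
        exact ⟨by linarith, by linarith⟩
      have heqavg := avg_sub_const hr hintg
        (2 * BMOAux.g (‖c‖ + r) - ⨍ x in ball c r, BMOAux.g ‖x‖)
      show (⨍ y in ball c r, |BMOAux.g ‖y‖ - ⨍ x in ball c r, BMOAux.g ‖x‖|) ≤ 76 + cF
      calc (⨍ y in ball c r, |BMOAux.g ‖y‖ - ⨍ x in ball c r, BMOAux.g ‖x‖|) ≤ _ := hmono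
        _ = (⨍ x in ball c r, BMOAux.g ‖x‖) -
            (2 * BMOAux.g (‖c‖ + r) - ⨍ x in ball c r, BMOAux.g ‖x‖) := heqavg
        _ ≤ 48 := by linarith
        _ ≤ 76 + cF := by linarith
    · -- pair bound
      intro c₁ r₁ c₂ r₂ hr₂ hr₁ h11 hsub
      have hdist := ball_incl (by positivity) hsub
      have h21 : 2 * r₂ ≤ r₁ := by linarith [dist_nonneg (x := c₂) (y := c₁)]
      have hd1 : ‖c₂‖ ≤ ‖c₁‖ + dist c₂ c₁ := by
        rw [dist_eq_norm]
        calc ‖c₂‖ = ‖c₁ + (c₂ - c₁)‖ := by rw [show c₁ + (c₂ - c₁) = c₂ from by abel]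
          _ ≤ ‖c₁‖ + ‖c₂ - c₁‖ := norm_add_le _ _
      have hd2 : ‖c₁‖ ≤ ‖c₂‖ + dist c₂ c₁ := by
        rw [dist_eq_norm]
        calc ‖c₁‖ = ‖c₂ + (c₁ - c₂)‖ := by rw [show c₂ + (c₁ - c₂) = c₁ from by abel]
          _ ≤ ‖c₂‖ + ‖c₁ - c₂‖ := norm_add_le _ _
          _ = ‖c₂‖ + ‖c₂ - c₁‖ := by rw [norm_sub_rev]
      have hρ₂0 : 0 < ‖c₂‖ + r₂ := add_pos_of_nonneg_of_pos (norm_nonneg c₂) hr₂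
      have hρorder : ‖c₂‖ + r₂ ≤ ‖c₁‖ + r₁ := by linarith
      have hgap : ‖c₁‖ + r₁ ≤ (‖c₂‖ + r₂) + 2 * r₁ := by linarith
      have hgp := g_pair hr₂ hr₁ h11 h21
        (by linarith [norm_nonneg c₂] : r₂ ≤ ‖c₂‖ + r₂)
        (by linarith [norm_nonneg c₁] : r₁ ≤ ‖c₁‖ + r₁) hρorder hgap
      have hA2u : ballAvg logLogFun c₂ r₂ ≤ BMOAux.g (‖c₂‖ + r₂) + 24 := ballAvg_g_le hr₂
      have hA2l : BMOAux.g (‖c₂‖ + r₂) ≤ ballAvg logLogFun c₂ r₂ := g_le_ballAvg hr₂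
      have hA1u : ballAvg logLogFun c₁ r₁ ≤ BMOAux.g (‖c₁‖ + r₁) + 24 := ballAvg_g_le hr₁
      have hA1l : BMOAux.g (‖c₁‖ + r₁) ≤ ballAvg logLogFun c₁ r₁ := g_le_ballAvg hr₁
      have hganti : BMOAux.g (‖c₁‖ + r₁) ≤ BMOAux.g (‖c₂‖ + r₂) := g_anti hρ₂0 hρorder
      have hratio := ratio_ge_one hr₂ h21 h11
      have hL0 : 0 ≤ Real.log ((1 - Real.log r₂) / (1 - Real.log r₁)) :=
        Real.log_nonneg hratio
      have habs : |ballAvg logLogFun c₂ r₂ - ballAvg logLogFun c₁ r₁| ≤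
          28 + Real.log ((1 - Real.log r₂) / (1 - Real.log r₁)) := by
        rw [abs_le]
        exact ⟨by linarith, by linarith⟩
      have hlogup : Real.log ((1 - Real.log r₂) / (1 - Real.log r₁)) ≤
          cF * F ((1 - Real.log r₂) / (1 - Real.log r₁)) := by
        calc Real.log ((1 - Real.log r₂) / (1 - Real.log r₁)) ≤
            Real.log (1 + (1 - Real.log r₂) / (1 - Real.log r₁)) :=
              Real.log_le_log (by linarith) (by linarith)
          _ ≤ cF * F ((1 - Real.log r₂) / (1 - Real.log r₁)) := hcF _ hratio
      have hFr := hF1 _ hratio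
      have h28 : (28:ℝ) ≤ 28 * F ((1 - Real.log r₂) / (1 - Real.log r₁)) := by nlinarith
      calc |ballAvg logLogFun c₂ r₂ - ballAvg logLogFun c₁ r₁| ≤
          28 + Real.log ((1 - Real.log r₂) / (1 - Real.log r₁)) := habs
        _ ≤ (28 + cF) * F ((1 - Real.log r₂) / (1 - Real.log r₁)) := by
            rw [add_mul]; linarith
        _ ≤ (76 + cF) * F ((1 - Real.log r₂) / (1 - Real.log r₁)) := by
            apply mul_le_mul_of_nonneg_right (by linarith) (by linarith)
  · -- logLogFun is unbounded
    rintro ⟨M, hM⟩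
    set t := Real.exp (1 - Real.exp (|M| + 1)) with htdef
    have ht0 : 0 < t := Real.exp_pos _
    set x : Plane := EuclideanSpace.single (0 : Fin 2) t with hxdef
    have hnx : ‖x‖ = t := by
      rw [hxdef, EuclideanSpace.norm_single, Real.norm_eq_abs, abs_of_pos ht0]
    have hexp1 : 1 ≤ Real.exp (|M| + 1) := Real.one_le_exp (by positivity)
    have ht1 : t ≤ 1 := by
      rw [htdef]
      calc Real.exp (1 - Real.exp (|M| + 1)) ≤ Real.exp 0 := Real.exp_le_exp.2 (by linarith)
        _ = 1 := Real.exp_zero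
    have hval : logLogFun x = |M| + 1 := by
      show (if ‖x‖ ≤ 1 then Real.log (1 - Real.log ‖x‖) else 0) = |M| + 1
      rw [if_pos (by rw [hnx]; exact ht1), hnx, htdef, Real.log_exp,
        show (1 : ℝ) - (1 - Real.exp (|M| + 1)) = Real.exp (|M| + 1) from by ring,
        Real.log_exp]
    have hMx := hM x
    rw [hval, abs_of_pos (by positivity : (0:ℝ) < |M| + 1)] at hMx
    linarith [le_abs_self M]
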